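/- For α = 1/2, minimizing c = w₁x₁ + w₂x₂ subject to (x₂/(1 + η·x₂))^(1/2)·x₁^(1/2) = q̄ with η ≥ 0 (and q̄·η·√(w₁/w₂) implicitly feasible) yields x̂₁ = √(w₂/w₁)·q̄ + η·q̄², x̂₂ = √(w₁/w₂)·q̄, and minimum cost 2√(w₁w₂)·q̄ + η·w₁·q̄². -/

import Mathlib

set_option maxHeartbeats 1000000 in
/-- optimal inputs and minimum cost with saturating pollination
B(x₂) = x₂/(1+ηx₂) and linear pesticide term, α = 1/2. -/
theorem saturating_pollination (w₁ w₂ η q : ℝ)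
    (hw₁ : 0 < w₁) (hw₂ : 0 < w₂) (hη : 0 ≤ η) (hq : 0 < q) :
    let x₁ : ℝ := Real.sqrt (w₂ / w₁) * q + η * q ^ 2
    let x₂ : ℝ := Real.sqrt (w₁ / w₂) * q
    let c : ℝ → ℝ → ℝ := fun a b => w₁ * a + w₂ * b
    Real.sqrt (x₂ / (1 + η * x₂)) * Real.sqrt x₁ = q ∧
    (∀ a b : ℝ, 0 < a → 0 < b →
      Real.sqrt (b / (1 + η * b)) * Real.sqrt a = q → c x₁ x₂ ≤ c a b) ∧
    c x₁ x₂ = 2 * Real.sqrt (w₁ * w₂) * q + η * w₁ * q ^ 2 := by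
  intro x₁ x₂ c
  set s : ℝ := Real.sqrt (w₁ / w₂) with hs_def
  set t : ℝ := Real.sqrt (w₂ / w₁) with ht_def
  have hs : 0 < s := Real.sqrt_pos.mpr (div_pos hw₁ hw₂)
  have ht : 0 < t := Real.sqrt_pos.mpr (div_pos hw₂ hw₁)
  have hst : s * t = 1 := by
    rw [hs_def, ht_def, ← Real.sqrt_mul (div_pos hw₁ hw₂).le]
    rw [div_mul_div_comm, mul_comm w₁ w₂, div_self (by positivity), Real.sqrt_one]
  have hsqw₂ : Real.sqrt (w₁ * w₂) = w₂ * s := by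
    rw [hs_def, show w₁ * w₂ = w₂ ^ 2 * (w₁ / w₂) by field_simp,
      Real.sqrt_mul (by positivity), Real.sqrt_sq hw₂.le]
  have hsqw₁ : Real.sqrt (w₁ * w₂) = w₁ * t := by
    rw [ht_def, show w₁ * w₂ = w₁ ^ 2 * (w₂ / w₁) by field_simp,
      Real.sqrt_mul (by positivity), Real.sqrt_sq hw₁.le]
  have hx₂ : x₂ = s * q := rfl
  have hx₂pos : 0 < x₂ := by rw [hx₂]; positivity
  have hden : 0 < 1 + η * x₂ := by positivity
  have hx₁pos : 0 < x₁ := by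
    have : x₁ = t * q + η * q ^ 2 := rfl
    rw [this]; positivity
  have hfeas : Real.sqrt (x₂ / (1 + η * x₂)) * Real.sqrt x₁ = q := by
    rw [← Real.sqrt_mul (by positivity)]
    rw [show x₂ / (1 + η * x₂) * x₁ = q ^ 2 by
      show s * q / (1 + η * (s * q)) * (t * q + η * q ^ 2) = q ^ 2
      rw [div_mul_eq_mul_div, div_eq_iff (by positivity : (1 + η * (s * q)) ≠ 0)]
      nlinarith [hst]]
    exact Real.sqrt_sq hq.le
  refine ⟨hfeas, ?_, ?_⟩
  · intro a b ha hb hab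
    have hdenb : 0 < 1 + η * b := by positivity
    have hsq : b / (1 + η * b) * a = q ^ 2 := by
      have := congrArg (fun z => z ^ 2) hab
      simp only [mul_pow] at this
      rw [Real.sq_sqrt (by positivity), Real.sq_sqrt ha.le] at this
      exact this
    have ha_eq : a = q ^ 2 * (1 + η * b) / b := by
      field_simp at hsq ⊢
      nlinarith [hsq]
    have hcx : c x₁ x₂ = 2 * Real.sqrt (w₁ * w₂) * q + η * w₁ * q ^ 2 := by
      show w₁ * (t * q + η * q ^ 2) + w₂ * (s * q) = _
      linear_combination (-q) * hsqw₁ - q * hsqw₂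
    rw [hcx]
    show 2 * Real.sqrt (w₁ * w₂) * q + η * w₁ * q ^ 2 ≤ w₁ * a + w₂ * b
    have key : 2 * Real.sqrt (w₁ * w₂) * q * b ≤ w₁ * q ^ 2 + w₂ * b ^ 2 := by
      have h1 : Real.sqrt (w₁ * w₂) = Real.sqrt w₁ * Real.sqrt w₂ :=
        Real.sqrt_mul hw₁.le w₂
      have h2 := sq_nonneg (Real.sqrt w₁ * q - Real.sqrt w₂ * b)
      have h3 := Real.sq_sqrt hw₁.le
      have h4 := Real.sq_sqrt hw₂.le
      have h5 : (Real.sqrt w₁ * q - Real.sqrt w₂ * b) ^ 2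
          = w₁ * q ^ 2 - 2 * Real.sqrt (w₁ * w₂) * q * b + w₂ * b ^ 2 := by
        linear_combination q ^ 2 * h3 + b ^ 2 * h4 + 2 * q * b * h1
      linarith [h2, h5.le, h5.ge]
    have ha' : w₁ * a = w₁ * q ^ 2 / b + η * w₁ * q ^ 2 := by
      rw [ha_eq]; field_simp
    have key2 : 2 * Real.sqrt (w₁ * w₂) * q ≤ w₁ * q ^ 2 / b + w₂ * b := by
      rw [div_add' _ _ _ (ne_of_gt hb), le_div_iff₀ hb]
      nlinarith [key]
    linarith [key2, ha'.le, ha'.ge]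
  · show w₁ * (t * q + η * q ^ 2) + w₂ * (s * q) = _
    linear_combination (-q) * hsqw₁ - q * hsqw₂
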